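/- Let R be a ring and (T,F) a hereditary torsion pair of finite type in Mod-R. Then there is a set S of finitely presented right R-modules such that F = {M | Hom_R(S,M) = 0 for all S ∈ S}. -/

import Mathlib

universe u

section Aux

variable {R : Type u} [Ring R]
variable (T F : (X : Type u) → [AddCommGroup X] → [Module R X] → Prop)

/-- The sum of all `T`-torsion submodules of `M`. -/
def tsub (M : Type u) [AddCommGroup M] [Module R M] : Submodule R M :=
  sSup {N : Submodule R M | T ↥N}

variable
  (htorsion : ∀ (X : Type u) [AddCommGroup X] [Module R X],
      T X ↔ ∀ (Y : Type u) [AddCommGroup Y] [Module R Y],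
        F Y → ∀ φ : X →ₗ[R] Y, φ = 0)

section
include htorsion

/-- `T` is closed under quotients (epimorphic images). -/
theorem t_of_surj {Y Z : Type u} [AddCommGroup Y] [Module R Y]
    [AddCommGroup Z] [Module R Z] (g : Y →ₗ[R] Z) (hg : Function.Surjective g)
    (hY : T Y) : T Z := by
  rw [htorsion]
  intro W _ _ hW φ
  have h0 : φ.comp g = 0 := (htorsion Y).mp hY W hW (φ.comp g)
  ext z
  obtain ⟨y, rfl⟩ := hg z
  exact LinearMap.ext_iff.mp h0 y

/-- `T` is closed under isomorphisms. -/
theorem t_of_equiv {Y Z : Type u} [AddCommGroup Y] [Module R Y]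
    [AddCommGroup Z] [Module R Z] (e : Y ≃ₗ[R] Z) (hY : T Y) : T Z :=
  t_of_surj T F htorsion e.toLinearMap e.surjective hY

/-- The image of a torsion submodule is torsion. -/
theorem t_map {Y Z : Type u} [AddCommGroup Y] [Module R Y]
    [AddCommGroup Z] [Module R Z] (g : Y →ₗ[R] Z) (A : Submodule R Y)
    (hA : T ↥A) : T ↥(A.map g) := by
  have hsurj : Function.Surjective
      (g.restrict (p := A) (q := A.map g) fun x hx => Submodule.mem_map_of_mem hx) := by
    rintro ⟨z, hz⟩
    obtain ⟨a, ha, rfl⟩ := Submodule.mem_map.mp hz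
    exact ⟨⟨a, ha⟩, rfl⟩
  exact t_of_surj T F htorsion _ hsurj hA

/-- The sum of all torsion submodules is torsion. -/
theorem t_tsub (M : Type u) [AddCommGroup M] [Module R M] : T ↥(tsub T M) := by
  rw [htorsion]
  intro W _ _ hW φ
  have e : tsub T M = ⨆ N : {N : Submodule R M | T ↥N}, (N : Submodule R M) :=
    sSup_eq_iSup' _
  ext ⟨x, hx⟩
  have hx' : x ∈ ⨆ N : {N : Submodule R M | T ↥N}, (N : Submodule R M) := e ▸ hx
  simp only [LinearMap.zero_apply]
  refine Submodule.iSup_induction' (motive := fun y _ => ∀ h : y ∈ tsub T M, φ ⟨y, h⟩ = 0)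
    _ ?_ ?_ ?_ hx' hx
  · intro N y hy h
    have hle : (N : Submodule R M) ≤ tsub T M := le_sSup N.property
    have h0 : φ.comp (Submodule.inclusion hle) = 0 :=
      (htorsion ↥(N : Submodule R M)).mp N.property W hW _
    have := LinearMap.ext_iff.mp h0 ⟨y, hy⟩
    exact this
  · intro h
    rw [show (⟨0, h⟩ : ↥(tsub T M)) = 0 from rfl, map_zero]
  · intro y z hy hz Cy Cz h
    have hy' : y ∈ tsub T M := e ▸ hy
    have hz' : z ∈ tsub T M := e ▸ hz
    rw [show (⟨y + z, h⟩ : ↥(tsub T M)) = ⟨y, hy'⟩ + ⟨z, hz'⟩ from rfl, map_add,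
      Cy hy', Cz hz', add_zero]

/-- `T` is closed under extensions. -/
theorem t_ext (M : Type u) [AddCommGroup M] [Module R M] (A : Submodule R M)
    (hA : T ↥A) (hQ : T (M ⧸ A)) : T M := by
  rw [htorsion]
  intro W _ _ hW φ
  have h1 : φ.comp A.subtype = 0 := (htorsion ↥A).mp hA W hW _
  have h3 : A ≤ LinearMap.ker φ := fun a ha => LinearMap.ext_iff.mp h1 ⟨a, ha⟩
  have h4 : A.liftQ φ h3 = 0 := (htorsion (M ⧸ A)).mp hQ W hW _
  ext m
  have := LinearMap.ext_iff.mp h4 (Submodule.Quotient.mk m)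
  rwa [Submodule.liftQ_apply] at this

end

variable
  (htorsionfree : ∀ (X : Type u) [AddCommGroup X] [Module R X],
      F X ↔ ∀ (Y : Type u) [AddCommGroup Y] [Module R Y],
        T Y → ∀ φ : Y →ₗ[R] X, φ = 0)

include htorsion htorsionfree in
/-- The quotient by the torsion part is torsion-free. -/
theorem f_quot_tsub (M : Type u) [AddCommGroup M] [Module R M] :
    F (M ⧸ tsub T M) := by
  rw [htorsionfree]
  intro Y _ _ hY φ
  set P : Submodule R M := (LinearMap.range φ).comap (tsub T M).mkQ with hP
  have hrange : T ↥(LinearMap.range φ) :=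
    t_of_surj T F htorsion φ.rangeRestrict φ.surjective_rangeRestrict hY
  have htP : tsub T M ≤ P := by
    intro m hm
    simp only [hP, Submodule.mem_comap, Submodule.mkQ_apply]
    rw [(Submodule.Quotient.mk_eq_zero _).mpr hm]
    exact zero_mem _
  set A : Submodule R ↥P := (tsub T M).comap P.subtype with hA
  have hAt : T ↥A :=
    t_of_equiv T F htorsion (Submodule.comapSubtypeEquivOfLe htP).symm
      (t_tsub T F htorsion M)
  set g : ↥P →ₗ[R] M ⧸ tsub T M := (tsub T M).mkQ.comp P.subtype with hg
  have hker : LinearMap.ker g = A := by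
    rw [hg, LinearMap.ker_comp, Submodule.ker_mkQ]
  have hrg : LinearMap.range g = LinearMap.range φ := by
    rw [hg, LinearMap.range_comp, Submodule.range_subtype, hP,
      Submodule.map_comap_eq, Submodule.range_mkQ, top_inf_eq]
  have hQP : T (↥P ⧸ A) :=
    t_of_equiv T F htorsion
      ((Submodule.quotEquivOfEq _ _ hker.symm).trans
        ((g.quotKerEquivRange).trans (LinearEquiv.ofEq _ _ hrg))).symm hrange
  have hTP : T ↥P := t_ext T F htorsion ↥P A hAt hQP
  have hPeq : P = tsub T M := le_antisymm (le_sSup hTP) htP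
  have hbot : LinearMap.range φ = ⊥ := by
    rw [eq_bot_iff, ← hrg]
    intro y hy
    obtain ⟨p, rfl⟩ := hy
    have hpt : (p : M) ∈ tsub T M := hPeq ▸ p.2
    have hgp : g p = Submodule.Quotient.mk (p : M) := rfl
    rw [Submodule.mem_bot, hgp, Submodule.Quotient.mk_eq_zero]
    exact hpt
  exact LinearMap.range_eq_bot.mp hbot


end Aux

/-- Let `R` be a ring and `(T, F)` a hereditary torsion pair of
finite type in `Mod-R` (formulated for modules over an arbitrary ring `R`;
classes of modules are predicates on modules).  Then there is a set `S` of
finitely presented modules (encoded as quotients `R^n / K` of finite free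
modules by finitely generated submodules) such that
`F = {M | Hom_R(S, M) = 0 for all S ∈ S}`. -/
theorem hereditary_finite_type_torsionfree_eq_hom_perp_of_fp
    (R : Type u) [Ring R]
    (T F : (X : Type u) → [AddCommGroup X] → [Module R X] → Prop)
    -- `(T, F)` is a torsion pair:
    (htorsion : ∀ (X : Type u) [AddCommGroup X] [Module R X],
      T X ↔ ∀ (Y : Type u) [AddCommGroup Y] [Module R Y],
        F Y → ∀ φ : X →ₗ[R] Y, φ = 0)
    (htorsionfree : ∀ (X : Type u) [AddCommGroup X] [Module R X],
      F X ↔ ∀ (Y : Type u) [AddCommGroup Y] [Module R Y],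
        T Y → ∀ φ : Y →ₗ[R] X, φ = 0)
    -- hereditary: `T` is closed under submodules:
    (hher : ∀ (X : Type u) [AddCommGroup X] [Module R X]
      (L : Submodule R X), T X → T L)
    -- finite type: `F` is closed under direct limits:
    (hft : ∀ (ι : Type u) [Preorder ι] [IsDirected ι (· ≤ ·)] [Nonempty ι]
        [DecidableEq ι]
        (G : ι → Type u) [∀ i, AddCommGroup (G i)] [∀ i, Module R (G i)]
        (f : ∀ i j, i ≤ j → G i →ₗ[R] G j) [DirectedSystem G (f · · ·)],
        (∀ i, F (G i)) → F (Module.DirectLimit G f)) :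
    ∃ S : Set ((n : ℕ) × Submodule R (Fin n → R)),
      (∀ s ∈ S, s.2.FG) ∧
      ∀ (X : Type u) [AddCommGroup X] [Module R X],
        F X ↔ ∀ s ∈ S, ∀ φ : ((Fin s.1 → R) ⧸ s.2) →ₗ[R] X, φ = 0 := by
  classical
  refine ⟨{s | s.2.FG ∧ T ((Fin s.1 → R) ⧸ s.2)}, fun s hs => hs.1, ?_⟩
  intro X _ _
  constructor
  · intro hF s hs φ
    exact (htorsionfree X).mp hF _ hs.2 φ
  · intro hX
    rw [htorsionfree]
    intro Y _ _ hY φ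
    suffices h : ∀ x : X, ∀ N : Submodule R X, T ↥N → x ∈ N → x = 0 by
      ext y
      have hr : T ↥(LinearMap.range φ) :=
        t_of_surj T F htorsion φ.rangeRestrict φ.surjective_rangeRestrict hY
      simpa using h (φ y) _ hr (LinearMap.mem_range_self φ y)
    intro x N hN hxN
    -- the map `R → X`, `r ↦ r • x`, as a map out of `Fin 1 → R`
    let π : (Fin 1 → R) →ₗ[R] X :=
      { toFun := fun v => v 0 • x
        map_add' := fun v w => by simp [add_smul]
        map_smul' := fun r v => by simp [mul_smul] }
    have hπx : π (fun _ => 1) = x := by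
      show ((fun _ : Fin 1 => (1 : R)) 0) • x = x
      simp
    -- the cyclic module `R•x` is torsion
    have hrle : LinearMap.range π ≤ N := by
      rintro _ ⟨v, rfl⟩
      exact N.smul_mem _ hxN
    have hrt : T ↥(LinearMap.range π) :=
      t_of_equiv T F htorsion (Submodule.comapSubtypeEquivOfLe hrle)
        (hher ↥N _ hN)
    have hQI : T ((Fin 1 → R) ⧸ LinearMap.ker π) :=
      t_of_equiv T F htorsion π.quotKerEquivRange.symm hrt
    -- the directed system of f.g. submodules of `ker π`
    let ι : Type u := {J : Submodule R (Fin 1 → R) // J.FG ∧ J ≤ LinearMap.ker π}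
    haveI : IsDirected ι (· ≤ ·) := ⟨fun a b =>
      ⟨⟨a.1 ⊔ b.1, a.2.1.sup b.2.1, sup_le a.2.2 b.2.2⟩,
        Subtype.coe_le_coe.mp le_sup_left, Subtype.coe_le_coe.mp le_sup_right⟩⟩
    haveI : Nonempty ι := ⟨⟨⊥, Submodule.fg_bot, bot_le⟩⟩
    let G : ι → Type u := fun J =>
      ((Fin 1 → R) ⧸ J.1) ⧸ tsub T ((Fin 1 → R) ⧸ J.1)
    let q : ∀ J J' : ι, J ≤ J' → ((Fin 1 → R) ⧸ J.1) →ₗ[R] ((Fin 1 → R) ⧸ J'.1) :=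
      fun J J' h => Submodule.mapQ J.1 J'.1 LinearMap.id (fun v hv => h hv)
    have hqcond : ∀ (J J' : ι) (h : J ≤ J'),
        tsub T ((Fin 1 → R) ⧸ J.1) ≤
          (tsub T ((Fin 1 → R) ⧸ J'.1)).comap (q J J' h) := by
      intro J J' h
      rw [← Submodule.map_le_iff_le_comap]
      exact le_sSup (t_map T F htorsion (q J J' h) _ (t_tsub T F htorsion _))
    let f : ∀ J J' : ι, J ≤ J' → G J →ₗ[R] G J' := fun J J' h =>
      Submodule.mapQ _ _ (q J J' h) (hqcond J J' h)
    have hfmk : ∀ (J J' : ι) (h : J ≤ J') (v : Fin 1 → R),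
        f J J' h (Submodule.Quotient.mk (Submodule.Quotient.mk v)) =
          Submodule.Quotient.mk (Submodule.Quotient.mk v) := by
      intro J J' h v
      rw [show f J J' h = Submodule.mapQ _ _ (q J J' h) (hqcond J J' h) from rfl,
        Submodule.mapQ_apply, show q J J' h = Submodule.mapQ J.1 J'.1 LinearMap.id
          (fun v hv => h hv) from rfl, Submodule.mapQ_apply, LinearMap.id_apply]
    haveI hds : DirectedSystem G (f · · ·) := by
      constructor
      · intro J z
        obtain ⟨w, rfl⟩ := Submodule.Quotient.mk_surjective _ z
        obtain ⟨v, rfl⟩ := Submodule.Quotient.mk_surjective _ w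
        exact hfmk J J le_rfl v
      · intro K J' J hJJ' hJ'K z
        obtain ⟨w, rfl⟩ := Submodule.Quotient.mk_surjective _ z
        obtain ⟨v, rfl⟩ := Submodule.Quotient.mk_surjective _ w
        rw [hfmk, hfmk, hfmk]
    -- the direct limit of the torsion-free quotients is torsion free
    have hFL : F (Module.DirectLimit G f) :=
      hft ι G f fun J => f_quot_tsub T F htorsion htorsionfree _
    -- a map from the torsion module `(Fin 1 → R) ⧸ ker π` to the direct limit
    let j0 : ι := ⟨⊥, Submodule.fg_bot, bot_le⟩
    let β : (Fin 1 → R) →ₗ[R] Module.DirectLimit G f :=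
      (Module.DirectLimit.of R ι G f j0).comp
        ((tsub T ((Fin 1 → R) ⧸ j0.1)).mkQ.comp j0.1.mkQ)
    have hβ : ∀ v : Fin 1 → R, β v = Module.DirectLimit.of R ι G f j0
        (Submodule.Quotient.mk (Submodule.Quotient.mk v)) := fun v => rfl
    have hker0 : LinearMap.ker π ≤ LinearMap.ker β := by
      intro v hv
      have hvfg : Submodule.span R {v} ≤ LinearMap.ker π :=
        (Submodule.span_singleton_le_iff_mem v _).mpr hv
      let Jv : ι := ⟨Submodule.span R {v}, Submodule.fg_span_singleton v, hvfg⟩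
      have hj0v : j0 ≤ Jv := Subtype.coe_le_coe.mp bot_le
      have h1 : f j0 Jv hj0v (Submodule.Quotient.mk (Submodule.Quotient.mk v)) = 0 := by
        rw [hfmk]
        have hz : (Submodule.Quotient.mk v : (Fin 1 → R) ⧸ Jv.1) = 0 :=
          (Submodule.Quotient.mk_eq_zero _).mpr (Submodule.mem_span_singleton_self v)
        rw [hz]
        exact (Submodule.Quotient.mk_eq_zero _).mpr (Submodule.zero_mem _)
      have h2 : β v = 0 := by
        have e1 : β v = Module.DirectLimit.of R ι G f Jv
            (f j0 Jv hj0v (Submodule.Quotient.mk (Submodule.Quotient.mk v))) :=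
          (Module.DirectLimit.of_f (hij := hj0v)).symm
        rw [e1, h1, map_zero]
      exact LinearMap.mem_ker.mpr h2
    let ψ : ((Fin 1 → R) ⧸ LinearMap.ker π) →ₗ[R] Module.DirectLimit G f :=
      Submodule.liftQ _ β hker0
    have hψ0 : ψ = 0 := (htorsionfree _).mp hFL _ hQI ψ
    have hε : Module.DirectLimit.of R ι G f j0
        (Submodule.Quotient.mk (Submodule.Quotient.mk (fun _ => (1 : R)))) = 0 := by
      have h1 : ψ (Submodule.Quotient.mk (fun _ : Fin 1 => (1 : R))) =
          Module.DirectLimit.of R ι G f j0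
            (Submodule.Quotient.mk (Submodule.Quotient.mk (fun _ => (1 : R)))) := rfl
      rw [← h1, hψ0, LinearMap.zero_apply]
    obtain ⟨J, hij, hJ0⟩ := Module.DirectLimit.of.zero_exact hε
    rw [hfmk] at hJ0
    have hmem : (Submodule.Quotient.mk (fun _ => (1 : R)) : (Fin 1 → R) ⧸ J.1) ∈
        tsub T ((Fin 1 → R) ⧸ J.1) :=
      (Submodule.Quotient.mk_eq_zero _).mp hJ0
    have htop : tsub T ((Fin 1 → R) ⧸ J.1) = ⊤ := by
      rw [eq_top_iff]
      intro z _
      obtain ⟨v, rfl⟩ := Submodule.Quotient.mk_surjective _ z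
      have hv : v = v 0 • (fun _ => (1 : R)) := by
        funext i
        have hi : i = 0 := Subsingleton.elim i 0
        subst hi
        simp
      rw [hv, Submodule.Quotient.mk_smul]
      exact Submodule.smul_mem _ _ hmem
    have hTQ : T ((Fin 1 → R) ⧸ J.1) := by
      refine t_of_equiv T F htorsion Submodule.topEquiv ?_
      exact htop ▸ t_tsub T F htorsion ((Fin 1 → R) ⧸ J.1)
    have hφ0 := hX ⟨1, J.1⟩ ⟨J.2.1, hTQ⟩ (Submodule.liftQ J.1 π J.2.2)
    have hx0 := LinearMap.ext_iff.mp hφ0 (Submodule.Quotient.mk (fun _ => (1 : R)))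
    rwa [Submodule.liftQ_apply, hπx, LinearMap.zero_apply] at hx0
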